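/- Let (S, Δ, P) be a probability space, let (α,β) be an (α,β)-pair with liminf_{n→∞} (β_n / α_n) > 1, and let 0 < γ₂ ≤ γ₁ ≤ 1. If a sequence {X_n} of real-valued random variables on S satisfies X_n →^{PS^{γ₁}} X and X_n →^{PS_{αβ}^{γ₂}} Y, then P(X = Y) = 1. -/

import Mathlib

open MeasureTheory Filter Set

/-- An (α,β)-pair: two non-decreasing sequences of positive reals with
`a n ≤ b n` for all `n` and `b n - a n → ∞`. -/
def ABPair (a b : ℕ → ℝ) : Prop :=
  Monotone a ∧ Monotone b ∧ (∀ n, 0 < a n) ∧ (∀ n, a n ≤ b n) ∧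
    Tendsto (fun n => b n - a n) atTop atTop

/-- The set of natural indices `k ∈ [a n, b n]` satisfying a predicate `p`. -/
def abIdx (a b : ℕ → ℝ) (n : ℕ) (p : ℕ → Prop) : Set ℕ :=
  {k : ℕ | a n ≤ (k : ℝ) ∧ (k : ℝ) ≤ b n ∧ p k}

/-- αβ-statistical convergence of order γ of a real sequence `x` to `l`. -/
def ABStatConv (a b : ℕ → ℝ) (γ : ℝ) (x : ℕ → ℝ) (l : ℝ) : Prop :=
  ∀ ε > 0,
    Tendsto (fun n => ((abIdx a b n fun k => ε ≤ |x k - l|).ncard : ℝ) / (b n - a n + 1) ^ γ)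
      atTop (nhds 0)

/-- αβ-statistical convergence of order γ in probability of the sequence of random
variables `X` to the random variable `L`, w.r.t. the probability measure `P`. -/
def PSConv {Ω : Type*} [MeasurableSpace Ω] (P : Measure Ω)
    (a b : ℕ → ℝ) (γ : ℝ) (X : ℕ → Ω → ℝ) (L : Ω → ℝ) : Prop :=
  ∀ ε > 0, ∀ δ > 0,
    Tendsto (fun n =>
      ((abIdx a b n fun k => δ ≤ (P {ω | ε ≤ |X k ω - L ω|}).toReal).ncard : ℝ)
        / (b n - a n + 1) ^ γ) atTop (nhds 0)

/-- αβ-strong p-Cesàro summability of order γ in probability. -/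
def PWConv {Ω : Type*} [MeasurableSpace Ω] (P : Measure Ω)
    (a b : ℕ → ℝ) (γ p : ℝ) (X : ℕ → Ω → ℝ) (L : Ω → ℝ) : Prop :=
  ∀ ε > 0,
    Tendsto (fun n =>
      (∑ k ∈ Finset.Icc ⌈a n⌉₊ ⌊b n⌋₊, ((P {ω | ε ≤ |X k ω - L ω|}).toReal) ^ p)
        / (b n - a n + 1) ^ γ) atTop (nhds 0)

/-- αβ-statistical convergence of order γ in r-th expectation. -/
def ESConv {Ω : Type*} [MeasurableSpace Ω] (P : Measure Ω)
    (a b : ℕ → ℝ) (γ r : ℝ) (X : ℕ → Ω → ℝ) (L : Ω → ℝ) : Prop :=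
  ∀ ε > 0,
    Tendsto (fun n =>
      ((abIdx a b n fun k => ε ≤ ∫ ω, |X k ω - L ω| ^ r ∂P).ncard : ℝ)
        / (b n - a n + 1) ^ γ) atTop (nhds 0)

/-- αβ-statistical convergence of order γ in distribution: the distribution functions
converge αβ-statistically of order γ at every continuity point of the limit d.f. -/
def DSConv {Ω : Type*} [MeasurableSpace Ω] (P : Measure Ω)
    (a b : ℕ → ℝ) (γ : ℝ) (X : ℕ → Ω → ℝ) (L : Ω → ℝ) : Prop :=
  ∀ x : ℝ, ContinuousAt (fun t => (P {ω | L ω ≤ t}).toReal) x →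
    ABStatConv a b γ (fun n => (P {ω | X n ω ≤ x}).toReal) ((P {ω | L ω ≤ x}).toReal)

/-- `K ⊆ ℕ` has αβ-density of order γ zero. -/
def ABDensityZero (a b : ℕ → ℝ) (γ : ℝ) (K : Set ℕ) : Prop :=
  Tendsto (fun n => ((abIdx a b n fun k => k ∈ K).ncard : ℝ) / (b n - a n + 1) ^ γ)
    atTop (nhds 0)

/-- αβ-statistical limit superior of order γ of a real sequence. -/
noncomputable def abStatLimsup (a b : ℕ → ℝ) (γ : ℝ) (x : ℕ → ℝ) : ℝ :=
  sSup {t : ℝ | ¬ ABDensityZero a b γ {k | t < x k}}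

/-- αβ-statistical limit inferior of order γ of a real sequence. -/
noncomputable def abStatLiminf (a b : ℕ → ℝ) (γ : ℝ) (x : ℕ → ℝ) : ℝ :=
  sInf {t : ℝ | ¬ ABDensityZero a b γ {k | x k < t}}

private lemma abIdx_eq_coe (a b : ℕ → ℝ) (n : ℕ) (p : ℕ → Prop) [DecidablePred p]
    (hb : 0 ≤ b n) :
    abIdx a b n p = ↑((Finset.Icc ⌈a n⌉₊ ⌊b n⌋₊).filter p) := by
  ext k
  simp only [abIdx, Set.mem_setOf_eq, Finset.coe_filter, Finset.mem_Icc, Nat.ceil_le,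
    Nat.le_floor_iff hb]
  tauto

/-- Theorem 2.8: if `liminf (β_n / α_n) > 1`, `X_n → X` statistically of order γ₁ in
probability and `X_n → Y` αβ-statistically of order γ₂ in probability, then `P(X = Y) = 1`. -/
theorem PS_PSab_limits_agree {Ω : Type*} [MeasurableSpace Ω]
    (P : Measure Ω) [IsProbabilityMeasure P]
    (a b : ℕ → ℝ) (hab : ABPair a b)
    (hliminf : 1 < Filter.liminf (fun n => b n / a n) atTop)
    (γ₁ γ₂ : ℝ) (hγ₂0 : 0 < γ₂) (h21 : γ₂ ≤ γ₁) (hγ₁1 : γ₁ ≤ 1)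
    (X : ℕ → Ω → ℝ) (Y Z : Ω → ℝ)
    (hX : ∀ n, Measurable (X n)) (hY : Measurable Y) (hZ : Measurable Z)
    (h1 : PSConv P (fun _ => 1) (fun n => (n : ℝ)) γ₁ X Y)
    (h2 : PSConv P a b γ₂ X Z) :
    P {ω | Y ω = Z ω} = 1 := by
  classical
  obtain ⟨haMono, hbMono, haPos, hale, hdiff⟩ := hab
  have hbPos : ∀ n, 0 < b n := fun n => lt_of_lt_of_le (haPos n) (hale n)
  have hγ₂1 : γ₂ ≤ 1 := le_trans h21 hγ₁1
  -- extract r with 1 < r and eventually r ≤ b n / a n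
  have hliminf' := hliminf
  rw [Filter.liminf_eq] at hliminf'
  have hSne : {t : ℝ | ∀ᶠ n in atTop, t ≤ b n / a n}.Nonempty := by
    by_contra h
    rw [Set.not_nonempty_iff_eq_empty] at h
    rw [h, Real.sSup_empty] at hliminf'
    linarith
  obtain ⟨r, hrS, hr1⟩ := exists_lt_of_lt_csSup hSne hliminf'
  have hrS' : ∀ᶠ n in atTop, r ≤ b n / a n := hrS
  have hc : (0:ℝ) < (r - 1) / r := div_pos (by linarith) (by linarith)
  -- b tends to atTop
  have hbTop : Tendsto b atTop atTop := by
    apply tendsto_atTop_mono (fun n => ?_) (tendsto_atTop_add_const_right atTop (a 0) hdiff)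
    have := haMono (Nat.zero_le n); linarith
  have hfloorTop : Tendsto (fun n => ⌊b n⌋₊) atTop atTop :=
    tendsto_nat_floor_atTop.comp hbTop
  have hDTop : Tendsto (fun n => b n - a n + 1) atTop atTop :=
    tendsto_atTop_add_const_right _ 1 hdiff
  have hD1 : ∀ n, (1:ℝ) ≤ b n - a n + 1 := fun n => by have := hale n; linarith
  have hDpos : ∀ n, (0:ℝ) < b n - a n + 1 := fun n => lt_of_lt_of_le one_pos (hD1 n)
  -- key lemma
  have key : ∀ ε : ℝ, 0 < ε → P {ω | ε ≤ |Y ω - Z ω|} = 0 := by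
    intro ε hε
    have h2δ : ∀ δ : ℝ, 0 < δ → (P {ω | ε ≤ |Y ω - Z ω|}).toReal < 2 * δ := by
      intro δ hδ
      set A : ℕ → Prop := fun k => δ ≤ (P {ω | ε/2 ≤ |X k ω - Y ω|}).toReal with hAdef
      set B : ℕ → Prop := fun k => δ ≤ (P {ω | ε/2 ≤ |X k ω - Z ω|}).toReal with hBdef
      set cardA : ℕ → ℝ := fun n => (((Finset.Icc ⌈a n⌉₊ ⌊b n⌋₊).filter A).card : ℝ) with hcardA
      set cardB : ℕ → ℝ := fun n => (((Finset.Icc ⌈a n⌉₊ ⌊b n⌋₊).filter B).card : ℝ) with hcardB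
      set gA : ℕ → ℝ := fun m => (((Finset.Icc 1 m).filter A).card : ℝ) with hgA
      -- transfer h1
      have hA1 : Tendsto (fun m : ℕ => gA m / (m:ℝ)^γ₁) atTop (nhds 0) := by
        have := h1 (ε/2) (by positivity) δ hδ
        convert this using 2 with m
        rw [abIdx_eq_coe _ _ _ _ (by positivity : (0:ℝ) ≤ ((fun n : ℕ => (n:ℝ)) m)),
          Set.ncard_coe_finset]
        simp [gA, Nat.floor_natCast]
        rfl
      have hA2 : Tendsto (fun n => gA ⌊b n⌋₊ / ((⌊b n⌋₊ : ℕ):ℝ)^γ₁) atTop (nhds 0) :=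
        hA1.comp hfloorTop
      -- transfer h2
      have hB2 : Tendsto (fun n => cardB n / (b n - a n + 1)^γ₂) atTop (nhds 0) := by
        have := h2 (ε/2) (by positivity) δ hδ
        convert this using 2 with n
        rw [abIdx_eq_coe _ _ _ _ (le_of_lt (hbPos n)), Set.ncard_coe_finset]
      -- cardA bound
      have hcardA_le : ∀ n, cardA n ≤ gA ⌊b n⌋₊ := by
        intro n
        have h1n : (1:ℕ) ≤ ⌈a n⌉₊ := Nat.one_le_ceil_iff.mpr (haPos n)
        simp only [hcardA, hgA]
        exact_mod_cast Finset.card_le_card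
          (Finset.filter_subset_filter _ (Finset.Icc_subset_Icc h1n le_rfl))
      -- eventually bound for cardA / D
      have hboundA : ∀ᶠ n in atTop,
          cardA n / (b n - a n + 1) ≤ (gA ⌊b n⌋₊ / ((⌊b n⌋₊ : ℕ):ℝ)^γ₁) / ((r-1)/r) := by
        filter_upwards [hrS', hfloorTop.eventually_ge_atTop 1] with n hrn hfl
        set t : ℝ := ((⌊b n⌋₊ : ℕ):ℝ)^γ₁ with ht
        have hfl' : (1:ℝ) ≤ ((⌊b n⌋₊ : ℕ):ℝ) := by exact_mod_cast hfl
        have htpos : (0:ℝ) < t := Real.rpow_pos_of_pos (by linarith) _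
        have ht1 : t ≤ ((⌊b n⌋₊ : ℕ):ℝ) := by
          calc t ≤ ((⌊b n⌋₊ : ℕ):ℝ)^(1:ℝ) := Real.rpow_le_rpow_of_exponent_le hfl' hγ₁1
          _ = _ := Real.rpow_one _
        have hfle : ((⌊b n⌋₊ : ℕ):ℝ) ≤ b n := Nat.floor_le (le_of_lt (hbPos n))
        have han : a n ≤ b n / r := by
          rw [le_div_iff₀ (by linarith : (0:ℝ) < r)]
          rw [le_div_iff₀ (haPos n)] at hrn
          linarith [hrn]
        have hDge : (r-1)/r * t ≤ b n - a n + 1 := by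
          have h1 : b n * ((r-1)/r) = b n - b n / r := by field_simp
          have h2 : (r-1)/r * t ≤ (r-1)/r * b n := by
            apply mul_le_mul_of_nonneg_left _ (le_of_lt hc)
            linarith
          nlinarith [hbPos n]
        calc cardA n / (b n - a n + 1) ≤ cardA n / ((r-1)/r * t) := by
              apply div_le_div_of_nonneg_left _ (by positivity) hDge
              positivity
          _ = (cardA n / t) / ((r-1)/r) := by
              rw [div_div]; ring_nf
          _ ≤ (gA ⌊b n⌋₊ / t) / ((r-1)/r) := by
              gcongr
              exact hcardA_le n
      have hAd : Tendsto (fun n => cardA n / (b n - a n + 1)) atTop (nhds 0) := by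
        apply squeeze_zero' (Eventually.of_forall (fun n =>
          div_nonneg (by simp only [hcardA]; positivity) (le_of_lt (hDpos n)))) hboundA
        simpa using hA2.div_const ((r-1)/r)
      have hBd : Tendsto (fun n => cardB n / (b n - a n + 1)) atTop (nhds 0) := by
        apply squeeze_zero (fun n =>
          div_nonneg (by simp only [hcardB]; positivity) (le_of_lt (hDpos n))) (fun n => ?_) hB2
        apply div_le_div_of_nonneg_left (by simp only [hcardB]; positivity)
          (Real.rpow_pos_of_pos (hDpos n) _)
        calc (b n - a n + 1)^γ₂ ≤ (b n - a n + 1)^(1:ℝ) :=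
              Real.rpow_le_rpow_of_exponent_le (hD1 n) hγ₂1
          _ = _ := Real.rpow_one _
      have hsum : Tendsto (fun n => (cardA n + cardB n) / (b n - a n + 1)) atTop (nhds 0) := by
        have := hAd.add hBd
        simpa [add_div] using this
      -- find a good index
      have hE1 : ∀ᶠ n in atTop, (cardA n + cardB n) / (b n - a n + 1) < 1/2 :=
        hsum.eventually_lt_const (by norm_num)
      have hE2 : ∀ᶠ n in atTop, (4:ℝ) ≤ b n - a n + 1 := hDTop.eventually_ge_atTop 4
      obtain ⟨n, hn1, hn2⟩ := (hE1.and hE2).exists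
      -- count of Icc
      have hba : (3:ℝ) ≤ b n - a n := by linarith
      have hceil : (⌈a n⌉₊:ℝ) < a n + 1 := Nat.ceil_lt_add_one (le_of_lt (haPos n))
      have hfloor : b n - 1 < ((⌊b n⌋₊ : ℕ):ℝ) := Nat.sub_one_lt_floor (b n)
      have hcf : ⌈a n⌉₊ ≤ ⌊b n⌋₊ := by
        apply Nat.le_floor
        push_cast
        linarith
      have hcard : (b n - a n + 1) - 2 ≤ ((Finset.Icc ⌈a n⌉₊ ⌊b n⌋₊).card : ℝ) := by
        rw [Nat.card_Icc]
        rw [Nat.cast_sub (by omega)]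
        push_cast
        linarith
      have hlt : cardA n + cardB n < ((Finset.Icc ⌈a n⌉₊ ⌊b n⌋₊).card : ℝ) := by
        rw [div_lt_iff₀ (hDpos n)] at hn1
        nlinarith
      have hltN : ((Finset.Icc ⌈a n⌉₊ ⌊b n⌋₊).filter A).card
          + ((Finset.Icc ⌈a n⌉₊ ⌊b n⌋₊).filter B).card
          < (Finset.Icc ⌈a n⌉₊ ⌊b n⌋₊).card := by
        simp only [hcardA, hcardB] at hlt
        exact_mod_cast hlt
      have hexk : ∃ k ∈ Finset.Icc ⌈a n⌉₊ ⌊b n⌋₊, ¬ (A k ∨ B k) := by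
        by_contra h
        push_neg at h
        have heq : (Finset.Icc ⌈a n⌉₊ ⌊b n⌋₊).filter (fun k => A k ∨ B k)
            = Finset.Icc ⌈a n⌉₊ ⌊b n⌋₊ := Finset.filter_true_of_mem h
        have hle : (Finset.Icc ⌈a n⌉₊ ⌊b n⌋₊).card
            ≤ ((Finset.Icc ⌈a n⌉₊ ⌊b n⌋₊).filter A).card
              + ((Finset.Icc ⌈a n⌉₊ ⌊b n⌋₊).filter B).card := by
          calc (Finset.Icc ⌈a n⌉₊ ⌊b n⌋₊).card
              = ((Finset.Icc ⌈a n⌉₊ ⌊b n⌋₊).filter (fun k => A k ∨ B k)).card := by rw [heq]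
            _ = ((Finset.Icc ⌈a n⌉₊ ⌊b n⌋₊).filter A
                ∪ (Finset.Icc ⌈a n⌉₊ ⌊b n⌋₊).filter B).card := by rw [Finset.filter_or]
            _ ≤ _ := Finset.card_union_le _ _
        omega
      obtain ⟨k, _, hk⟩ := hexk
      push_neg at hk
      obtain ⟨hkA, hkB⟩ := hk
      rw [hAdef] at hkA
      rw [hBdef] at hkB
      simp only [not_le] at hkA hkB
      -- measure estimate
      have hsub : {ω | ε ≤ |Y ω - Z ω|}
          ⊆ {ω | ε/2 ≤ |X k ω - Y ω|} ∪ {ω | ε/2 ≤ |X k ω - Z ω|} := by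
        intro ω hω
        simp only [Set.mem_setOf_eq, Set.mem_union] at hω ⊢
        by_contra h
        push_neg at h
        obtain ⟨ha1, ha2⟩ := h
        have h3 : |Y ω - Z ω| ≤ |X k ω - Y ω| + |X k ω - Z ω| := by
          have := abs_sub_le (Y ω) (X k ω) (Z ω)
          rw [abs_sub_comm (Y ω) (X k ω)] at this
          exact this
        linarith
      calc (P {ω | ε ≤ |Y ω - Z ω|}).toReal
          ≤ (P ({ω | ε/2 ≤ |X k ω - Y ω|} ∪ {ω | ε/2 ≤ |X k ω - Z ω|})).toReal :=
            ENNReal.toReal_mono (measure_ne_top _ _) (measure_mono hsub)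
        _ ≤ (P {ω | ε/2 ≤ |X k ω - Y ω|} + P {ω | ε/2 ≤ |X k ω - Z ω|}).toReal :=
            ENNReal.toReal_mono
              (ENNReal.add_ne_top.mpr ⟨measure_ne_top _ _, measure_ne_top _ _⟩)
              (measure_union_le _ _)
        _ = (P {ω | ε/2 ≤ |X k ω - Y ω|}).toReal + (P {ω | ε/2 ≤ |X k ω - Z ω|}).toReal :=
            ENNReal.toReal_add (measure_ne_top _ _) (measure_ne_top _ _)
        _ < δ + δ := add_lt_add hkA hkB
        _ = 2 * δ := by ring
    have ht0 : (P {ω | ε ≤ |Y ω - Z ω|}).toReal = 0 := by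
      by_contra h
      have htp : 0 < (P {ω | ε ≤ |Y ω - Z ω|}).toReal :=
        lt_of_le_of_ne ENNReal.toReal_nonneg (Ne.symm h)
      have := h2δ ((P {ω | ε ≤ |Y ω - Z ω|}).toReal / 2) (by positivity)
      linarith
    rcases (ENNReal.toReal_eq_zero_iff _).mp ht0 with h | h
    · exact h
    · exact absurd h (measure_ne_top _ _)
  -- conclude
  have hne : P {ω | Y ω = Z ω}ᶜ = 0 := by
    have hsub : {ω | Y ω = Z ω}ᶜ ⊆ ⋃ m : ℕ, {ω | 1/((m:ℝ)+1) ≤ |Y ω - Z ω|} := by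
      intro ω hω
      have hne' : Y ω ≠ Z ω := hω
      have habs : 0 < |Y ω - Z ω| := abs_pos.mpr (sub_ne_zero.mpr hne')
      obtain ⟨m, hm⟩ := exists_nat_one_div_lt habs
      exact Set.mem_iUnion.mpr ⟨m, le_of_lt hm⟩
    exact measure_mono_null hsub
      (measure_iUnion_null fun m => key (1/((m:ℝ)+1)) (by positivity))
  have hms : MeasurableSet {ω | Y ω = Z ω} := measurableSet_eq_fun hY hZ
  exact (prob_compl_eq_zero_iff hms).mp hne
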